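/- Let m, N be integers with N ≥ 1, and set β := exp(πi m (N+2)/4) and γ := exp(πi m (N−2)/4). Then β + γ + 2(−1)^{N−1} = 0 if and only if one of the following holds: (i) m ≡ 0 (mod 4) and N is even; (ii) m ≡ 2 (mod 4) and N ≡ 2 (mod 4); (iii) m ≡ 4 (mod 8) and N is odd. Moreover, if β + γ + 2(−1)^{N−1} ≠ 0, then |β + γ + 2(−1)^{N−1}| ≥ 2. -/

import Mathlib

open Complex

/-- `β = exp(πim(N+2)/4)`. -/
noncomputable def betaC (m : ℤ) (N : ℕ) : ℂ :=
  Complex.exp (Real.pi * Complex.I * (m : ℂ) * ((N : ℂ) + 2) / 4)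

/-- `γ = exp(πim(N-2)/4)`. -/
noncomputable def gammaC (m : ℤ) (N : ℕ) : ℂ :=
  Complex.exp (Real.pi * Complex.I * (m : ℂ) * ((N : ℂ) - 2) / 4)

lemma exp_pi_div_two_mul_I' : Complex.exp ((Real.pi : ℂ) / 2 * I) = I := by
  have h : ((Real.pi : ℂ) / 2) = ((Real.pi / 2 : ℝ) : ℂ) := by push_cast; ring
  rw [Complex.exp_mul_I, h, ← Complex.ofReal_cos, ← Complex.ofReal_sin,
    Real.cos_pi_div_two, Real.sin_pi_div_two]
  simp

lemma I_zpow_emod (c : ℤ) : I ^ c = I ^ (c % 4) := by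
  conv_lhs => rw [show c = 4 * (c / 4) + c % 4 by omega]
  rw [zpow_add₀ Complex.I_ne_zero, zpow_mul,
    show (I : ℂ) ^ (4 : ℤ) = 1 by
      rw [show (4 : ℤ) = ((4 : ℕ) : ℤ) from rfl, zpow_natCast, Complex.I_pow_four],
    one_zpow, one_mul]

lemma abs_ge_two_of_re (z : ℂ) (h : 2 ≤ |z.re|) : 2 ≤ ‖z‖ :=
  h.trans (Complex.abs_re_le_norm z)

lemma key (c : ℤ) (N : ℕ) (hN : 1 ≤ N) :
    ((2 * I ^ c + 2 * (-1 : ℂ) ^ (N - 1) = 0) ↔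
      ((c % 4 = 0 ∧ Even N) ∨ (c % 4 = 2 ∧ Odd N))) ∧
    (2 * I ^ c + 2 * (-1 : ℂ) ^ (N - 1) ≠ 0 →
      2 ≤ ‖2 * I ^ c + 2 * (-1 : ℂ) ^ (N - 1)‖) := by
  have hpow : (-1 : ℂ) ^ (N - 1) = if Even N then -1 else 1 := by
    rcases Nat.even_or_odd N with h | h
    · rw [if_pos h]; exact (Nat.Even.sub_odd hN h odd_one).neg_one_pow
    · rw [if_neg (Nat.not_even_iff_odd.mpr h)]; exact (Nat.Odd.sub_odd h odd_one).neg_one_pow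
  have h4 : c % 4 = 0 ∨ c % 4 = 1 ∨ c % 4 = 2 ∨ c % 4 = 3 := by omega
  have hI2 : (I : ℂ) ^ (2 : ℤ) = -1 := by
    rw [show (2 : ℤ) = ((2 : ℕ) : ℤ) from rfl, zpow_natCast]; simp [pow_two, Complex.I_mul_I]
  have hI3 : (I : ℂ) ^ (3 : ℤ) = -I := by
    rw [show (3 : ℤ) = ((3 : ℕ) : ℤ) from rfl, zpow_natCast]
    simp [pow_succ, pow_two, Complex.I_mul_I]
  rcases Nat.even_or_odd N with hNp | hNp
  · rw [if_pos hNp] at hpow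
    have hno : ¬ Odd N := Nat.not_odd_iff_even.mpr hNp
    rw [I_zpow_emod, hpow]
    rcases h4 with h4 | h4 | h4 | h4 <;> rw [h4]
    · have hv : (2:ℂ) * I ^ ((0:ℤ)) + 2 * (-1) = 0 := by norm_num
      exact ⟨⟨fun _ => Or.inl ⟨rfl, hNp⟩, fun _ => hv⟩, fun hne => absurd hv hne⟩
    · have hv : (2:ℂ) * I ^ ((1:ℤ)) + 2 * (-1) = 2 * I + 2 * (-1) := by norm_num
      rw [hv]
      constructor
      · constructor
        · intro h; exact absurd h (by simp [Complex.ext_iff])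
        · rintro (⟨a, _⟩ | ⟨_, b⟩) <;> exfalso <;> first | omega | exact hno b
      · intro _; exact abs_ge_two_of_re _ (by simp)
    · have hv : (2:ℂ) * I ^ ((2:ℤ)) + 2 * (-1) = 2 * (-1) + 2 * (-1) := by rw [hI2]
      rw [hv]
      constructor
      · constructor
        · intro h; exact absurd h (by norm_num)
        · rintro (⟨a, _⟩ | ⟨_, b⟩) <;> exfalso <;> first | omega | exact hno b
      · intro _; exact abs_ge_two_of_re _ (by norm_num)
    · have hv : (2:ℂ) * I ^ ((3:ℤ)) + 2 * (-1) = 2 * (-I) + 2 * (-1) := by rw [hI3]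
      rw [hv]
      constructor
      · constructor
        · intro h; exact absurd h (by simp [Complex.ext_iff])
        · rintro (⟨a, _⟩ | ⟨_, b⟩) <;> exfalso <;> first | omega | exact hno b
      · intro _; exact abs_ge_two_of_re _ (by simp)
  · rw [if_neg (Nat.not_even_iff_odd.mpr hNp)] at hpow
    have hne' : ¬ Even N := Nat.not_even_iff_odd.mpr hNp
    rw [I_zpow_emod, hpow]
    rcases h4 with h4 | h4 | h4 | h4 <;> rw [h4]
    · have hv : (2:ℂ) * I ^ ((0:ℤ)) + 2 * 1 = 2 * 1 + 2 * 1 := by norm_num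
      rw [hv]
      constructor
      · constructor
        · intro h; exact absurd h (by norm_num)
        · rintro (⟨_, b⟩ | ⟨a, _⟩) <;> exfalso <;> first | omega | exact hne' b
      · intro _; exact abs_ge_two_of_re _ (by norm_num)
    · have hv : (2:ℂ) * I ^ ((1:ℤ)) + 2 * 1 = 2 * I + 2 * 1 := by norm_num
      rw [hv]
      constructor
      · constructor
        · intro h; exact absurd h (by simp [Complex.ext_iff])
        · rintro (⟨_, b⟩ | ⟨a, _⟩) <;> exfalso <;> first | omega | exact hne' b
      · intro _; exact abs_ge_two_of_re _ (by simp)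
    · have hv : (2:ℂ) * I ^ ((2:ℤ)) + 2 * 1 = 0 := by rw [hI2]; ring
      exact ⟨⟨fun _ => Or.inr ⟨rfl, hNp⟩, fun _ => hv⟩, fun hne => absurd hv hne⟩
    · have hv : (2:ℂ) * I ^ ((3:ℤ)) + 2 * 1 = 2 * (-I) + 2 * 1 := by rw [hI3]
      rw [hv]
      constructor
      · constructor
        · intro h; exact absurd h (by simp [Complex.ext_iff])
        · rintro (⟨_, b⟩ | ⟨a, _⟩) <;> exfalso <;> first | omega | exact hne' b
      · intro _; exact abs_ge_two_of_re _ (by simp)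

lemma bridge (k : ℤ) (N : ℕ) :
    ((k * ((N : ℤ) - 2)) % 4 = 0 ∧ Even N) ∨ ((k * ((N : ℤ) - 2)) % 4 = 2 ∧ Odd N) ↔
    ((2 * k) % 4 = 0 ∧ Even N) ∨ ((2 * k) % 4 = 2 ∧ N % 4 = 2) ∨
      ((2 * k) % 8 = 4 ∧ Odd N) := by
  have hc : (k * ((N : ℤ) - 2)) % 4 = (k % 4) * (((N : ℤ) - 2) % 4) % 4 := Int.mul_emod _ _ _
  rw [Nat.even_iff, Nat.odd_iff]
  generalize hq : (k * ((N : ℤ) - 2)) % 4 = q at hc ⊢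
  have hk : k % 4 = 0 ∨ k % 4 = 1 ∨ k % 4 = 2 ∨ k % 4 = 3 := by omega
  have hn : ((N : ℤ) - 2) % 4 = 0 ∨ ((N : ℤ) - 2) % 4 = 1 ∨ ((N : ℤ) - 2) % 4 = 2 ∨
      ((N : ℤ) - 2) % 4 = 3 := by omega
  rcases hk with hk | hk | hk | hk <;> rcases hn with hn | hn | hn | hn <;>
    rw [hk, hn] at hc <;> norm_num at hc <;> omega

/-- Lemma 10 of the paper: `β + γ + 2(-1)^{N-1} = 0` iff (i) `m ≡ 0 (mod 4)` and `N`
even, (ii) `m ≡ 2 (mod 4)` and `N ≡ 2 (mod 4)`, or (iii) `m ≡ 4 (mod 8)` and `N` odd;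
and when nonzero, `|β + γ + 2(-1)^{N-1}| ≥ 2`. -/
theorem beta_gamma_lemma (m : ℤ) (N : ℕ) (hN : 1 ≤ N) :
    (betaC m N + gammaC m N + 2 * (-1 : ℂ) ^ (N - 1) = 0 ↔
      (m % 4 = 0 ∧ Even N) ∨ (m % 4 = 2 ∧ N % 4 = 2) ∨ (m % 8 = 4 ∧ Odd N)) ∧
    (betaC m N + gammaC m N + 2 * (-1 : ℂ) ^ (N - 1) ≠ 0 →
      2 ≤ ‖betaC m N + gammaC m N + 2 * (-1 : ℂ) ^ (N - 1)‖) := by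
  have hbg : betaC m N = gammaC m N * (-1 : ℂ) ^ m := by
    unfold betaC gammaC
    rw [show (Real.pi : ℂ) * I * (m : ℂ) * ((N : ℂ) + 2) / 4 =
        (Real.pi : ℂ) * I * (m : ℂ) * ((N : ℂ) - 2) / 4 + (m : ℂ) * (Real.pi * I) by ring,
      Complex.exp_add, Complex.exp_int_mul, Complex.exp_pi_mul_I]
  rcases Int.even_or_odd m with ⟨k, hk⟩ | hm
  · -- m even, m = k + k
    have hm2 : m = 2 * k := by omega
    have hg : gammaC m N = I ^ (k * ((N : ℤ) - 2)) := by
      unfold gammaC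
      rw [show (Real.pi : ℂ) * I * (m : ℂ) * ((N : ℂ) - 2) / 4 =
          ((k * ((N : ℤ) - 2) : ℤ) : ℂ) * ((Real.pi : ℂ) / 2 * I) by
            push_cast [hm2]; ring,
        Complex.exp_int_mul, exp_pi_div_two_mul_I']
    have hb : betaC m N = gammaC m N := by
      rw [hbg, Even.neg_one_zpow ⟨k, hk⟩, mul_one]
    have hexpr : betaC m N + gammaC m N + 2 * (-1 : ℂ) ^ (N - 1) =
        2 * I ^ (k * ((N : ℤ) - 2)) + 2 * (-1 : ℂ) ^ (N - 1) := by
      rw [hb, hg]; ring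
    rw [hexpr]
    obtain ⟨h1, h2⟩ := key (k * ((N : ℤ) - 2)) N hN
    refine ⟨h1.trans ?_, h2⟩
    rw [hm2]
    exact bridge k N
  · -- m odd
    have hodd : (-1 : ℂ) ^ m = -1 := hm.neg_one_zpow
    have hsum : betaC m N + gammaC m N = 0 := by rw [hbg, hodd]; ring
    have hmm : m % 2 = 1 := Int.odd_iff.mp hm
    have habs1 : ‖(-1 : ℂ) ^ (N - 1)‖ = 1 := by
      rcases Nat.even_or_odd (N - 1) with h | h
      · rw [h.neg_one_pow]; simp
      · rw [h.neg_one_pow]; simp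
    constructor
    · constructor
      · intro h
        rw [hsum, zero_add] at h
        have := congrArg (fun z : ℂ => ‖z‖) h
        rw [norm_mul, habs1] at this
        simp at this
      · rintro (⟨h1, _⟩ | ⟨h1, _⟩ | ⟨h1, _⟩) <;> omega
    · intro _
      rw [hsum, zero_add, norm_mul, habs1, mul_one]
      simp
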